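/- Let Q be a collection of partial partitions of a finite set X. There is a bijection between the minimal restricted chordal completions of int(Q) and the minimal chordal sandwiches of (int*(Q), forb(Q)). -/

import Mathlib

open SimpleGraph

/-- `f : ZMod n → V` traces an induced cycle of length `n` in `G`:
`f` is injective and adjacency holds exactly between consecutive vertices. -/
def IsInducedCycle {V : Type*} (G : SimpleGraph V) (n : ℕ) (f : ZMod n → V) : Prop :=
  Function.Injective f ∧ ∀ i j : ZMod n, G.Adj (f i) (f j) ↔ (j = i + 1 ∨ i = j + 1)

/-- A graph is chordal if it has no induced cycle of length at least 4. -/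
def Chordal {V : Type*} (G : SimpleGraph V) : Prop :=
  ∀ n, 4 ≤ n → ∀ f : ZMod n → V, ¬ IsInducedCycle G n f

/-- `G'` is a chordal completion of `G`. -/
def ChordalCompletion {V : Type*} (G G' : SimpleGraph V) : Prop :=
  Chordal G' ∧ G ≤ G'

/-- Minimal chordal completion: no proper spanning subgraph containing `G` is chordal. -/
def MinimalChordalCompletion {V : Type*} (G G' : SimpleGraph V) : Prop :=
  ChordalCompletion G G' ∧ ∀ H, ChordalCompletion G H → H ≤ G' → H = G'

/-- A chordal sandwich of `(G₁, G₂)`: a chordal graph containing all edges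
of `G₁` and no edge of `G₂`. -/
def ChordalSandwich {V : Type*} (G₁ G₂ G' : SimpleGraph V) : Prop :=
  Chordal G' ∧ G₁ ≤ G' ∧ ∀ u v : V, G'.Adj u v → ¬ G₂.Adj u v

/-- Minimal chordal sandwich: no proper spanning subgraph is a chordal sandwich. -/
def MinimalChordalSandwich {V : Type*} (G₁ G₂ G' : SimpleGraph V) : Prop :=
  ChordalSandwich G₁ G₂ G' ∧ ∀ H, ChordalSandwich G₁ G₂ H → H ≤ G' → H = G'

/-- A partial partition of `X`, given as its set of cells: nonempty,
pairwise disjoint cells, at least two of them. -/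
def IsPartialPartition {X : Type*} (π : Set (Set X)) : Prop :=
  (∀ A ∈ π, A.Nonempty) ∧ (π.Pairwise fun A B => A ∩ B = ∅) ∧ π.Nontrivial

/-- Vertices of the partial partition intersection graph: pairs `(A, π)`
with `π ∈ Q` and `A` a cell of `π`. -/
def IntVert {X : Type*} (Q : Set (Set (Set X))) : Type _ :=
  {p : Set X × Set (Set X) // p.2 ∈ Q ∧ p.1 ∈ p.2}

/-- Cells of members of `Q`, the vertices of the cell intersection graph. -/
def Cell {X : Type*} (Q : Set (Set (Set X))) : Type _ :=
  {A : Set X // ∃ π ∈ Q, A ∈ π}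

/-- The partial partition intersection graph `int(Q)`. -/
def intGraph {X : Type*} (Q : Set (Set (Set X))) : SimpleGraph (IntVert Q) where
  Adj p q := p ≠ q ∧ (p.1.1 ∩ q.1.1).Nonempty
  symm := by
    constructor
    rintro p q ⟨h1, h2⟩
    exact ⟨h1.symm, by rwa [Set.inter_comm]⟩
  loopless := by constructor; rintro p ⟨h1, _⟩; exact h1 rfl

/-- The cell intersection graph `int*(Q)`. -/
def intStarGraph {X : Type*} (Q : Set (Set (Set X))) : SimpleGraph (Cell Q) where
  Adj A B := A.1 ≠ B.1 ∧ (A.1 ∩ B.1).Nonempty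
  symm := by
    constructor
    rintro A B ⟨h1, h2⟩
    exact ⟨h1.symm, by rwa [Set.inter_comm]⟩
  loopless := by constructor; rintro A ⟨h1, _⟩; exact h1 rfl

/-- The graph `forb(Q)`: two cells are adjacent iff they are distinct cells
of a common partial partition of `Q`. -/
def forbGraph {X : Type*} (Q : Set (Set (Set X))) : SimpleGraph (Cell Q) where
  Adj A B := A.1 ≠ B.1 ∧ ∃ π ∈ Q, A.1 ∈ π ∧ B.1 ∈ π
  symm := by
    constructor
    rintro A B ⟨h1, π, hπ, hA, hB⟩
    exact ⟨h1.symm, π, hπ, hB, hA⟩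
  loopless := by constructor; rintro A ⟨h1, _⟩; exact h1 rfl

/-- A restricted chordal completion of `int(Q)`: a chordal completion in which
distinct cells of a common partial partition stay non-adjacent. -/
def RestrictedChordalCompletion {X : Type*} (Q : Set (Set (Set X)))
    (G' : SimpleGraph (IntVert Q)) : Prop :=
  ChordalCompletion (intGraph Q) G' ∧
    ∀ p q : IntVert Q, p.1.2 = q.1.2 → p.1.1 ≠ q.1.1 → ¬ G'.Adj p q

def MinimalRestrictedChordalCompletion {X : Type*} (Q : Set (Set (Set X)))
    (G' : SimpleGraph (IntVert Q)) : Prop :=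
  RestrictedChordalCompletion Q G' ∧
    ∀ H, RestrictedChordalCompletion Q H → H ≤ G' → H = G'

section Chains
variable {V : Type*} (G : SimpleGraph V)
def IsChainW (f : ℕ → V) (m : ℕ) : Prop := ∀ i < m, G.Adj (f i) (f (i+1))
variable {G}
lemma IsChainW.mono {f : ℕ → V} {m m' : ℕ} (h : IsChainW G f m) (hm : m' ≤ m) :
    IsChainW G f m' := fun i hi => h i (lt_of_lt_of_le hi hm)
def chainCat (f : ℕ → V) (m : ℕ) (g : ℕ → V) : ℕ → V :=
  fun k => if k ≤ m then f k else g (k - m)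

lemma chainCat_left {f : ℕ → V} {m : ℕ} {g : ℕ → V} {k : ℕ} (h : k ≤ m) :
    chainCat f m g k = f k := if_pos h

lemma chainCat_right {f : ℕ → V} {m : ℕ} {g : ℕ → V} (hfg : f m = g 0) {k : ℕ} (h : m ≤ k) :
    chainCat f m g k = g (k - m) := by
  rcases eq_or_lt_of_le h with h' | h'
  · rw [← h']; simp [chainCat, hfg]
  · exact if_neg (by omega)

lemma chainCat_chain {f : ℕ → V} {m₁ : ℕ} {g : ℕ → V} {m₂ : ℕ}
    (hf : IsChainW G f m₁) (hg : IsChainW G g m₂) (hfg : f m₁ = g 0) :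
    IsChainW G (chainCat f m₁ g) (m₁ + m₂) := by
  intro i hi
  rcases lt_or_ge i m₁ with h | h
  · rw [chainCat_left (by omega), chainCat_left (by omega)]
    exact hf i h
  · rw [chainCat_right hfg h, chainCat_right hfg (by omega)]
    have e : i + 1 - m₁ = (i - m₁) + 1 := by omega
    rw [e]
    exact hg _ (by omega)

lemma chainCat_last {f : ℕ → V} {m₁ : ℕ} {g : ℕ → V} (m₂ : ℕ) (hfg : f m₁ = g 0) :
    chainCat f m₁ g (m₁ + m₂) = g m₂ := by
  rw [chainCat_right hfg (by omega)]; congr 1; omega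

lemma chainCat_mem {f : ℕ → V} {m₁ : ℕ} {g : ℕ → V} {m₂ : ℕ} (Pr : V → Prop)
    (hf : ∀ k ≤ m₁, Pr (f k)) (hg : ∀ k ≤ m₂, Pr (g k)) :
    ∀ k ≤ m₁ + m₂, Pr (chainCat f m₁ g k) := by
  intro k hk
  rcases le_or_gt k m₁ with h | h
  · rw [chainCat_left h]; exact hf k h
  · rw [chainCat, if_neg (by omega)]; exact hg _ (by omega)

def chainRev (f : ℕ → V) (m : ℕ) : ℕ → V := fun k => f (m - k)

lemma chainRev_chain {f : ℕ → V} {m : ℕ} (hf : IsChainW G f m) :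
    IsChainW G (chainRev f m) m := by
  intro i hi
  have h1 : m - i = (m - (i+1)) + 1 := by omega
  have h2 := hf (m - (i+1)) (by omega)
  show G.Adj (f (m - i)) (f (m - (i+1)))
  rw [h1]
  exact h2.symm

/-- single edge chain -/
def eChain (a b : V) : ℕ → V := fun k => if k = 0 then a else b

lemma eChain_chain {a b : V} (h : G.Adj a b) : IsChainW G (eChain a b) 1 := by
  intro i hi
  have : i = 0 := by omega
  subst this
  simpa [eChain] using h

end Chains

section Induced
variable {V : Type*} {G : SimpleGraph V} {T : Set V} {x y : V}

lemma exists_induced_chain (hxy : x ≠ y) (hadj : ¬ G.Adj x y)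
    (h : ∃ m f, IsChainW G f m ∧ f 0 = x ∧ f m = y ∧ ∀ i, 0 < i → i < m → f i ∈ T) :
    ∃ m f, 2 ≤ m ∧ IsChainW G f m ∧ f 0 = x ∧ f m = y ∧
      (∀ i, 0 < i → i < m → f i ∈ T) ∧
      (∀ i j, i ≤ m → j ≤ m → f i = f j → i = j) ∧
      (∀ i j, i ≤ m → j ≤ m → G.Adj (f i) (f j) → j = i + 1 ∨ i = j + 1) := by
  classical
  set P : ℕ → Prop := fun m => ∃ f, IsChainW G f m ∧ f 0 = x ∧ f m = y ∧
      ∀ i, 0 < i → i < m → f i ∈ T with hP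
  obtain ⟨m₀, f, hm₀⟩ := h
  have hex : ∃ m, P m := ⟨m₀, f, hm₀⟩
  set m := Nat.find hex with hm
  obtain ⟨g, hg, hg0, hgm, hgT⟩ : P m := Nat.find_spec hex
  have hmin : ∀ k, k < m → ¬ P k := fun k hk => Nat.find_min hex hk
  have hm2 : 2 ≤ m := by
    by_contra h2
    interval_cases m
    · exact hxy (hg0 ▸ hgm ▸ rfl)
    · exact hadj (by rw [← hg0, ← hgm]; exact hg 0 (by omega))
  have splice : ∀ i j, i < j → j ≤ m → ¬ (i = 0 ∧ j = m) →
      (g i = g j ∨ (G.Adj (g i) (g j) ∧ i + 2 ≤ j)) → False := by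
    intro i j hij hjm hnotends hbr
    rcases hbr with heq | ⟨hadj', hij2⟩
    · set m' := m - (j - i) with hm'
      have hm'lt : m' < m := by omega
      apply hmin m' hm'lt
      refine ⟨fun k => if k ≤ i then g k else g (k + (j - i)), ?_, ?_, ?_, ?_⟩
      · intro k hk
        beta_reduce
        rcases lt_or_ge k i with h | h
        · rw [if_pos (by omega : k ≤ i), if_pos (by omega : k + 1 ≤ i)]
          exact hg k (by omega)
        · have e1 : (if k ≤ i then g k else g (k + (j - i))) = g (k + (j - i)) := by
            rcases eq_or_lt_of_le h with h' | h'
            · rw [if_pos (by omega : k ≤ i)]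
              have hki : k = i := h'.symm
              rw [hki, heq]
              congr 1
              omega
            · exact if_neg (by omega)
          rw [e1, if_neg (by omega : ¬ (k + 1 ≤ i))]
          have e3 : k + 1 + (j - i) = (k + (j - i)) + 1 := by omega
          rw [e3]
          exact hg _ (by omega)
      · beta_reduce; rw [if_pos (by omega : (0:ℕ) ≤ i)]; exact hg0
      · beta_reduce
        rcases le_or_gt m' i with h | h
        · have hi' : m' = i := by omega
          have hj' : j = m := by omega
          rw [if_pos h, hi', heq, hj']; exact hgm
        · rw [if_neg (by omega)]
          have : m' + (j - i) = m := by omega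
          rw [this]; exact hgm
      · intro k hk0 hkm'
        beta_reduce
        rcases le_or_gt k i with h | h
        · rw [if_pos h]; exact hgT k hk0 (by omega)
        · rw [if_neg (by omega)]; exact hgT _ (by omega) (by omega)
    · set m' := m - (j - i - 1) with hm'
      have hm'lt : m' < m := by omega
      have hm'i : i + 1 ≤ m' := by omega
      apply hmin m' hm'lt
      refine ⟨fun k => if k ≤ i then g k else g (k + (j - i - 1)), ?_, ?_, ?_, ?_⟩
      · intro k hk
        beta_reduce
        rcases lt_or_ge k i with h | h
        · rw [if_pos (by omega : k ≤ i), if_pos (by omega : k + 1 ≤ i)]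
          exact hg k (by omega)
        · rcases eq_or_lt_of_le h with h' | h'
          · have hki : k = i := h'.symm
            rw [if_pos (by omega : k ≤ i), if_neg (by omega : ¬ (k + 1 ≤ i)), hki]
            have : i + 1 + (j - i - 1) = j := by omega
            rw [this]
            exact hadj'
          · rw [if_neg (by omega), if_neg (by omega)]
            have e3 : k + 1 + (j - i - 1) = (k + (j - i - 1)) + 1 := by omega
            rw [e3]
            exact hg _ (by omega)
      · beta_reduce; rw [if_pos (by omega : (0:ℕ) ≤ i)]; exact hg0
      · beta_reduce
        rw [if_neg (by omega)]
        have : m' + (j - i - 1) = m := by omega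
        rw [this]; exact hgm
      · intro k hk0 hkm'
        beta_reduce
        rcases le_or_gt k i with h | h
        · rw [if_pos h]; exact hgT k hk0 (by omega)
        · rw [if_neg (by omega)]
          exact hgT _ (by omega) (by omega)
  have hinj : ∀ i j, i ≤ m → j ≤ m → g i = g j → i = j := by
    intro i j hi hj he
    by_contra hne
    rcases lt_or_gt_of_ne hne with h | h
    · refine splice i j h hj ?_ (Or.inl he)
      rintro ⟨h0, hm'⟩
      rw [h0, hm', hg0, hgm] at he
      exact hxy he
    · refine splice j i h hi ?_ (Or.inl he.symm)
      rintro ⟨h0, hm'⟩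
      rw [h0, hm', hg0, hgm] at he
      exact hxy he.symm
  have hchord : ∀ i j, i ≤ m → j ≤ m → G.Adj (g i) (g j) → j = i + 1 ∨ i = j + 1 := by
    intro i j hi hj ha
    by_contra hcon
    push_neg at hcon
    rcases Nat.lt_trichotomy i j with h | h | h
    · refine splice i j h hj ?_ (Or.inr ⟨ha, by omega⟩)
      rintro ⟨h0, hm'⟩
      rw [h0, hm', hg0, hgm] at ha
      exact hadj ha
    · rw [h] at ha; exact (G.loopless.irrefl _ ha)
    · refine splice j i h hi ?_ (Or.inr ⟨ha.symm, by omega⟩)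
      rintro ⟨h0, hm'⟩
      rw [h0, hm', hg0, hgm] at ha
      exact hadj ha.symm
  exact ⟨m, g, hm2, hg, hg0, hgm, hgT, hinj, hchord⟩

end Induced

section Glue
variable {V : Type*} {G : SimpleGraph V} {A B : Set V} {x y : V}

/-- Two "induced chains" from x to y, one with interior in A, one in B,
with no edges (or shared vertices) between A and B, give an induced cycle:
contradiction with chordality. -/
lemma no_double_induced_chain (hG : Chordal G) (hxy : x ≠ y) (hadj : ¬ G.Adj x y)
    (hAB : ∀ a ∈ A, ∀ b ∈ B, a ≠ b ∧ ¬ G.Adj a b)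
    (hxA : x ∉ A) (hxB : x ∉ B) (hyA : y ∉ A) (hyB : y ∉ B)
    (hA : ∃ m f, IsChainW G f m ∧ f 0 = x ∧ f m = y ∧ ∀ i, 0 < i → i < m → f i ∈ A)
    (hB : ∃ m f, IsChainW G f m ∧ f 0 = x ∧ f m = y ∧ ∀ i, 0 < i → i < m → f i ∈ B) :
    False := by
  obtain ⟨mA, fA, hmA2, hfA, hfA0, hfAm, hfAT, hfAinj, hfAch⟩ :=
    exists_induced_chain hxy hadj hA
  obtain ⟨mB, fB, hmB2, hfB, hfB0, hfBm, hfBT, hfBinj, hfBch⟩ :=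
    exists_induced_chain hxy hadj hB
  set n := mA + mB with hn
  have hn4 : 4 ≤ n := by omega
  have hnpos : 0 < n := by omega
  haveI : NeZero n := ⟨by omega⟩
  -- the cycle as a function on ℕ
  set F : ℕ → V := fun t => if t ≤ mA then fA t else fB (n - t) with hF
  have hF_le : ∀ t, t ≤ mA → F t = fA t := fun t ht => if_pos ht
  have hF_gt : ∀ t, mA < t → F t = fB (n - t) := fun t ht => if_neg (by omega)
  -- injectivity of F on [0, n)
  have hFinj : ∀ t₁ t₂, t₁ < n → t₂ < n → F t₁ = F t₂ → t₁ = t₂ := by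
    have cross : ∀ t₁ t₂, t₁ ≤ mA → mA < t₂ → t₂ < n → F t₁ = F t₂ → False := by
      intro t₁ t₂ h1 h2 h2n he
      rw [hF_le _ h1, hF_gt _ h2] at he
      have hBint : fB (n - t₂) ∈ B := hfBT _ (by omega) (by omega)
      rcases Nat.eq_or_lt_of_le (Nat.zero_le t₁) with h0 | h0
      · rw [← h0, hfA0] at he; exact hxB (he ▸ hBint)
      · rcases Nat.eq_or_lt_of_le h1 with hm | hm
        · rw [hm, hfAm] at he; exact hyB (he ▸ hBint)
        · have hAint : fA t₁ ∈ A := hfAT _ (by omega) (by omega)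
          exact (hAB _ hAint _ hBint).1 he
    intro t₁ t₂ h1 h2 he
    rcases le_or_gt t₁ mA with ha | ha <;> rcases le_or_gt t₂ mA with hb | hb
    · rw [hF_le _ ha, hF_le _ hb] at he; exact hfAinj _ _ ha hb he
    · exact absurd he (fun he => cross t₁ t₂ ha hb h2 he)
    · exact absurd he.symm (fun he => cross t₂ t₁ hb ha h1 he)
    · rw [hF_gt _ ha, hF_gt _ hb] at he
      have := hfBinj _ _ (by omega) (by omega) he
      omega
  -- adjacency characterization on ℕ indices, for a < b < n
  have hadj_lt : ∀ a b, a < b → b < n → (G.Adj (F a) (F b) ↔ (b = a + 1 ∨ (a = 0 ∧ b = n - 1))) := by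
    intro a b hab hbn
    constructor
    · intro hadj'
      rcases le_or_gt b mA with hb | hb
      · rw [hF_le _ (by omega), hF_le _ hb] at hadj'
        have := hfAch _ _ (by omega) hb hadj'
        omega
      · rcases le_or_gt a mA with ha | ha
        · rw [hF_le _ ha, hF_gt _ hb] at hadj'
          have hsb : 1 ≤ n - b ∧ n - b ≤ mB - 1 := by omega
          rcases Nat.eq_or_lt_of_le (Nat.zero_le a) with h0 | h0
          · -- a = 0 : x adjacent to fB (n-b)
            rw [← h0, hfA0, ← hfB0] at hadj'
            have := hfBch _ _ (by omega) (by omega) hadj'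
            omega
          · rcases Nat.eq_or_lt_of_le ha with hm | hm
            · -- a = mA : y adjacent to fB (n-b)
              rw [hm, hfAm, ← hfBm] at hadj'
              have := hfBch _ _ (le_refl _) (by omega) hadj'
              omega
            · have hAint : fA a ∈ A := hfAT _ (by omega) (by omega)
              have hBint : fB (n - b) ∈ B := hfBT _ (by omega) (by omega)
              exact ((hAB _ hAint _ hBint).2 hadj').elim
        · rw [hF_gt _ ha, hF_gt _ hb] at hadj'
          have := hfBch _ _ (by omega : n - a ≤ mB) (by omega : n - b ≤ mB) hadj'
          omega
    · rintro (rfl | ⟨rfl, rfl⟩)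
      · -- consecutive
        rcases lt_or_ge a mA with h | h
        · rw [hF_le _ (by omega), hF_le _ (by omega)]
          exact hfA a h
        · rcases eq_or_lt_of_le h with h' | h'
          · rw [hF_le _ (by omega : a ≤ mA), hF_gt _ (by omega)]
            have e1 : fA a = fB mB := by rw [← h', hfAm, ← hfBm]
            have e2 : n - (a + 1) = mB - 1 := by omega
            have h3 : mB - 1 + 1 = mB := by omega
            have h4 := hfB (mB - 1) (by omega)
            rw [h3] at h4
            rw [e1, e2]
            exact h4.symm
          · rw [hF_gt _ (by omega), hF_gt _ (by omega)]
            have e : n - a = (n - (a+1)) + 1 := by omega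
            rw [e]
            exact (hfB (n - (a+1)) (by omega)).symm
      · -- a = 0, b = n - 1
        rw [hF_le _ (by omega), hF_gt _ (by omega)]
        have e : n - (n - 1) = 1 := by omega
        rw [e, hfA0, ← hfB0]
        exact hfB 0 (by omega)
  -- now build the ZMod cycle
  have hv1 : (1 : ZMod n).val = 1 := by
    rw [ZMod.val_one_eq_one_mod]; exact Nat.mod_eq_of_lt (by omega)
  have hvadd1 : ∀ i : ZMod n, (i + 1).val = (i.val + 1) % n := by
    intro i; rw [ZMod.val_add, hv1]
  have hvlt : ∀ i : ZMod n, i.val < n := fun i => ZMod.val_lt i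
  have hsucc_iff : ∀ i j : ZMod n, j = i + 1 ↔ j.val = (i.val + 1) % n := by
    intro i j
    constructor
    · intro h; rw [h, hvadd1]
    · intro h
      apply ZMod.val_injective
      rw [h, hvadd1]
  have hmod : ∀ a : ℕ, a < n → ((a+1) % n = a+1 ∧ a+1 < n) ∨ ((a+1) % n = 0 ∧ a + 1 = n) := by
    intro a ha
    rcases lt_or_ge (a+1) n with h | h
    · exact Or.inl ⟨Nat.mod_eq_of_lt h, h⟩
    · have h' : a+1 = n := by omega
      exact Or.inr ⟨by rw [h', Nat.mod_self], h'⟩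
  have hadj_iff : ∀ a b, a < n → b < n →
      (G.Adj (F a) (F b) ↔ (b = a+1 ∨ a = b+1 ∨ (a = 0 ∧ b = n-1) ∨ (b = 0 ∧ a = n-1))) := by
    intro a b ha hb
    rcases Nat.lt_trichotomy a b with h | h | h
    · rw [hadj_lt a b h hb]; omega
    · constructor
      · intro h'; rw [h] at h'; exact absurd h' (G.loopless.irrefl _)
      · intro h'; exfalso; omega
    · rw [adj_comm, hadj_lt b a h ha]; omega
  set Fc : ZMod n → V := fun i => F i.val with hFc
  apply hG n hn4 Fc
  constructor
  · intro i j he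
    exact ZMod.val_injective n (hFinj _ _ (hvlt i) (hvlt j) he)
  · intro i j
    rw [hsucc_iff i j, hsucc_iff j i]
    show G.Adj (F i.val) (F j.val) ↔ _
    have ha := hvlt i
    have hb := hvlt j
    rw [hadj_iff _ _ ha hb]
    rcases hmod i.val ha with ⟨e1, l1⟩ | ⟨e1, l1⟩ <;>
      rcases hmod j.val hb with ⟨e2, l2⟩ | ⟨e2, l2⟩ <;>
      rw [e1, e2] <;> omega
end Glue

section Separator
variable {V : Type*} {G : SimpleGraph V}

def SepSet (G : SimpleGraph V) (u w : V) (S : Set V) : Prop :=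
  ∀ (f : ℕ → V) (m : ℕ), IsChainW G f m → f 0 = u → f m = w → ∃ i, i ≤ m ∧ f i ∈ S

lemma clique_separator [Finite V] (hG : Chordal G) {u w : V} (hne : u ≠ w)
    (hadj : ¬ G.Adj u w) :
    ∃ S : Set V, u ∉ S ∧ w ∉ S ∧ SepSet G u w S ∧
      ∀ x ∈ S, ∀ y ∈ S, x ≠ y → G.Adj x y := by
  classical
  set P : Set V → Prop := fun S => u ∉ S ∧ w ∉ S ∧ SepSet G u w S with hP
  have hP0 : P {v | v ≠ u ∧ v ≠ w} := by
    refine ⟨by simp, by simp [hne.symm], ?_⟩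
    intro f m hf h0 hm
    have hm1 : 1 ≤ m := by
      rcases Nat.eq_zero_or_pos m with h | h
      · exfalso; apply hne; rw [← h0, ← hm, h]
      · exact h
    have hadj1 : G.Adj u (f 1) := h0 ▸ hf 0 (by omega)
    refine ⟨1, hm1, ?_, ?_⟩
    · intro h; rw [h] at hadj1; exact G.loopless.irrefl _ hadj1
    · intro h; rw [h] at hadj1; exact hadj hadj1
  obtain ⟨S, -, hSmin⟩ := exists_minimal_le_of_wellFoundedLT _ _ hP0
  obtain ⟨hu, hw, hsep⟩ : P S := hSmin.1
  -- reachability sets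
  set R : V → Set V := fun v0 =>
    {v | ∃ f m, IsChainW G f m ∧ f 0 = v0 ∧ f m = v ∧ ∀ i ≤ m, f i ∉ S} with hR
  have hRS : ∀ v0, ∀ v ∈ R v0, v ∉ S := by
    rintro v0 v ⟨f, m, hf, h0, hm, havoid⟩
    rw [← hm]; exact havoid m (le_refl m)
  have hRself : ∀ v0, v0 ∉ S → v0 ∈ R v0 := by
    intro v0 h
    exact ⟨fun _ => v0, 0, fun i hi => absurd hi (by omega), rfl, rfl,
      fun i _ => h⟩
  have hprefix : ∀ v0 (f : ℕ → V) m, IsChainW G f m → f 0 = v0 →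
      (∀ i ≤ m, f i ∉ S) → ∀ k ≤ m, f k ∈ R v0 := by
    intro v0 f m hf h0 havoid k hk
    exact ⟨f, k, hf.mono hk, h0, rfl, fun i hi => havoid i (le_trans hi hk)⟩
  -- no connection between R u and R w
  have hAB : ∀ a ∈ R u, ∀ b ∈ R w, a ≠ b ∧ ¬ G.Adj a b := by
    rintro a ⟨f, m, hf, h0, hm, havoid⟩ b ⟨g, mg, hg, hg0, hgm, hgavoid⟩
    have hrev : IsChainW G (chainRev g mg) mg := chainRev_chain hg
    have hrev0 : chainRev g mg 0 = b := by simpa [chainRev] using hgm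
    have hrevm : chainRev g mg mg = w := by simpa [chainRev] using hg0
    constructor
    · intro he
      -- chain u → a = b → w avoiding S
      have hcc : IsChainW G (chainCat f m (chainRev g mg)) (m + mg) :=
        chainCat_chain hf hrev (by rw [hm, hrev0, he])
      obtain ⟨i, him, hiS⟩ := hsep _ _ hcc
        (by rw [chainCat_left (Nat.zero_le m), h0])
        (by rw [chainCat_last mg (by rw [hm, hrev0, he]), hrevm])
      exact chainCat_mem (fun v => v ∉ S) havoid
        (fun k hk => by rw [chainRev]; exact hgavoid _ (by omega)) i him hiS
    · intro hab
      -- chain u → a → b → w avoiding S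
      have h1 : IsChainW G (chainCat f m (eChain a b)) (m + 1) :=
        chainCat_chain hf (eChain_chain hab) (by rw [hm]; rfl)
      have h1last : chainCat f m (eChain a b) (m + 1) = b :=
        (chainCat_last 1 (by rw [hm]; rfl)).trans rfl
      have hcc : IsChainW G (chainCat (chainCat f m (eChain a b)) (m+1) (chainRev g mg))
          ((m+1) + mg) := chainCat_chain h1 hrev (by rw [h1last, hrev0])
      obtain ⟨i, him, hiS⟩ := hsep _ _ hcc
        (by rw [chainCat_left (Nat.zero_le _), chainCat_left (Nat.zero_le m), h0])
        (by rw [chainCat_last mg (by rw [h1last, hrev0]), hrevm])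
      refine chainCat_mem (fun v => v ∉ S) ?_
        (fun k hk => by rw [chainRev]; exact hgavoid _ (by omega)) i him hiS
      refine chainCat_mem (fun v => v ∉ S) havoid ?_
      intro k hk
      interval_cases k
      · simpa [eChain] using (by rw [← hm]; exact havoid m (le_refl m) : a ∉ S)
      · simpa [eChain] using hRS w b ⟨g, mg, hg, hg0, hgm, hgavoid⟩
  -- every x in S has a neighbor in R u and in R w
  have hnbr : ∀ x ∈ S, (∃ a ∈ R u, G.Adj a x) ∧ (∃ b ∈ R w, G.Adj b x) := by
    intro x hx
    have hPS' : ¬ P (S \ {x}) := by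
      intro hP'
      have hSS : S ≤ S \ {x} := hSmin.2 hP' (by intro v hv; exact hv.1)
      exact (hSS hx).2 rfl
    have hnosep : ¬ SepSet G u w (S \ {x}) := by
      intro hs
      exact hPS' ⟨fun h => hu h.1, fun h => hw h.1, hs⟩
    rw [SepSet] at hnosep
    push_neg at hnosep
    obtain ⟨f, m, hf, h0, hm, havoid⟩ := hnosep
    have havoid' : ∀ i ≤ m, f i ∈ S → f i = x := by
      intro i hi hiS
      by_contra hne'
      exact havoid i hi ⟨hiS, hne'⟩
    -- generic: from a chain hitting x, extract neighbor reachable from the start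
    have extract : ∀ (g : ℕ → V) mg, IsChainW G g mg →
        (∀ i ≤ mg, g i ∈ S → g i = x) → (∃ i, i ≤ mg ∧ g i = x) → g 0 ∉ S →
        ∃ a, a ∈ R (g 0) ∧ G.Adj a x := by
      intro g mg hg hgS hgx hg0S
      have hex : ∃ i, i ≤ mg ∧ g i = x := hgx
      obtain ⟨hi₁m, hi₁x⟩ := Nat.find_spec hex
      have hi₁min : ∀ k, k < Nat.find hex → ¬ (k ≤ mg ∧ g k = x) :=
        fun k hk => Nat.find_min hex hk
      have hi₁pos : 0 < Nat.find hex := by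
        rcases Nat.eq_zero_or_pos (Nat.find hex) with h | h
        · exfalso; rw [h] at hi₁x; apply hg0S; rw [hi₁x]; exact hx
        · exact h
      refine ⟨g (Nat.find hex - 1), ?_, ?_⟩
      · refine hprefix _ g (Nat.find hex - 1) (hg.mono (by omega)) rfl ?_ _ (le_refl _)
        intro k hk hkS
        have hgkx := hgS k (by omega) hkS
        exact hi₁min k (by omega) ⟨by omega, hgkx⟩
      · have hadjx := hg (Nat.find hex - 1) (by omega)
        have e : Nat.find hex - 1 + 1 = Nat.find hex := by omega
        rw [e, hi₁x] at hadjx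
        exact hadjx
    obtain ⟨i, hi, hiS⟩ := hsep f m hf h0 hm
    have hix : f i = x := havoid' i hi hiS
    constructor
    · obtain ⟨a, ha, haadj⟩ := extract f m hf havoid' ⟨i, hi, hix⟩ (by rw [h0]; exact hu)
      rw [h0] at ha
      exact ⟨a, ha, haadj⟩
    · have hrev : IsChainW G (chainRev f m) m := chainRev_chain hf
      have hr0 : chainRev f m 0 = w := by simpa [chainRev] using hm
      obtain ⟨b, hb, hbadj⟩ := extract (chainRev f m) m hrev
        (fun j hj hjS => havoid' (m - j) (by omega) hjS)
        ⟨m - i, by omega, by show f (m - (m - i)) = x; rw [(by omega : m - (m-i) = i)]; exact hix⟩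
        (by rw [hr0]; exact hw)
      rw [hr0] at hb
      exact ⟨b, hb, hbadj⟩
  -- S is a clique
  refine ⟨S, hu, hw, hsep, ?_⟩
  intro x hx y hy hxy
  by_contra hnadj
  obtain ⟨⟨ax, hax, haxadj⟩, ⟨bx, hbx, hbxadj⟩⟩ := hnbr x hx
  obtain ⟨⟨ay, hay, hayadj⟩, ⟨by_, hby, hbyadj⟩⟩ := hnbr y hy
  -- build chain from x to y with interior in R u, and one with interior in R w
  have build : ∀ (v0 : V) (a b : V), a ∈ R v0 → b ∈ R v0 → G.Adj a x → G.Adj b y →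
      ∃ m f, IsChainW G f m ∧ f 0 = x ∧ f m = y ∧ ∀ i, 0 < i → i < m → f i ∈ R v0 := by
    intro v0 a b ha hb haadj hbadj
    obtain ⟨f, m, hf, hf0, hfm, hfavoid⟩ := ha
    obtain ⟨g, mg, hg, hg0, hgm, hgavoid⟩ := hb
    -- x → a → (rev f) → v0 → (g) → b → y
    have hrev : IsChainW G (chainRev f m) m := chainRev_chain hf
    have hr0 : chainRev f m 0 = a := by simpa [chainRev] using hfm
    have hrm : chainRev f m m = v0 := by simpa [chainRev] using hf0
    have c1 : IsChainW G (chainCat (eChain x a) 1 (chainRev f m)) (1 + m) :=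
      chainCat_chain (eChain_chain haadj.symm) hrev (by simpa [eChain] using hr0.symm)
    have c1last : chainCat (eChain x a) 1 (chainRev f m) (1 + m) = v0 :=
      (chainCat_last m (by simpa [eChain] using hr0.symm)).trans hrm
    have c2 : IsChainW G (chainCat (chainCat (eChain x a) 1 (chainRev f m)) (1+m) g)
        ((1+m) + mg) := chainCat_chain c1 hg (by rw [c1last, hg0])
    have c2last : chainCat (chainCat (eChain x a) 1 (chainRev f m)) (1+m) g ((1+m)+mg) = b :=
      (chainCat_last mg (by rw [c1last, hg0])).trans hgm
    set big := chainCat (chainCat (chainCat (eChain x a) 1 (chainRev f m)) (1+m) g)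
        ((1+m)+mg) (eChain b y) with hbig
    have hc2e : chainCat (chainCat (eChain x a) 1 (chainRev f m)) (1+m) g ((1+m)+mg)
        = eChain b y 0 := by rw [c2last]; rfl
    have c3 : IsChainW G big ((1+m)+mg+1) := chainCat_chain c2 (eChain_chain hbadj) hc2e
    refine ⟨(1+m)+mg+1, big, c3, ?_, ?_, ?_⟩
    · rw [hbig, chainCat_left (by omega), chainCat_left (by omega),
        chainCat_left (by omega)]
      rfl
    · rw [hbig]
      have := chainCat_last (f := chainCat (chainCat (eChain x a) 1 (chainRev f m)) (1+m) g)
        (m₁ := (1+m)+mg) (g := eChain b y) 1 hc2e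
      rw [this]
      rfl
    · intro i hi0 hiM
      have hi' : i ≤ (1+m)+mg := by omega
      rw [hbig, chainCat_left hi']
      rcases le_or_gt i (1+m) with h | h
      · rw [chainCat_left h]
        have e1 : chainCat (eChain x a) 1 (chainRev f m) i = chainRev f m (i - 1) :=
          chainCat_right (by simpa [eChain] using hr0.symm) (by omega)
        rw [e1]
        show f (m - (i-1)) ∈ R v0
        exact hprefix v0 f m hf hf0 hfavoid _ (by omega)
      · rw [chainCat_right (by rw [c1last, hg0]) (by omega)]
        exact hprefix v0 g mg hg hg0 hgavoid _ (by omega)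
  have hchainA := build u ax ay hax hay haxadj hayadj
  have hchainB := build w bx by_ hbx hby hbxadj hbyadj
  have hxRu : x ∉ R u := fun h => hRS u x h hx
  have hxRw : x ∉ R w := fun h => hRS w x h hx
  have hyRu : y ∉ R u := fun h => hRS u y h hy
  have hyRw : y ∉ R w := fun h => hRS w y h hy
  obtain ⟨mA, fA, h1, h2, h3, h4⟩ := hchainA
  obtain ⟨mB, fB, g1, g2, g3, g4⟩ := hchainB
  exact no_double_induced_chain hG hxy hnadj hAB hxRu hxRw hyRu hyRw
    ⟨mA, fA, h1, h2, h3, h4⟩ ⟨mB, fB, g1, g2, g3, g4⟩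

end Separator

section LemmaL
variable {V : Type*} {G : SimpleGraph V}

/-- helper: distinct small naturals give distinct elements of ZMod n -/
lemma zmod_cast_ne {n a b : ℕ} (ha : a < n) (hb : b < n) (hab : a ≠ b) :
    ((a : ℕ) : ZMod n) ≠ ((b : ℕ) : ZMod n) := by
  haveI : NeZero n := ⟨by omega⟩
  intro he
  apply hab
  have hv := congrArg ZMod.val he
  rwa [ZMod.val_natCast_of_lt ha, ZMod.val_natCast_of_lt hb] at hv

/-- The key configuration lemma: in a chordal graph there is no cyclic family of
nonempty, pairwise disjoint vertex classes, complete between consecutive classes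
and non-complete between all non-consecutive ones. -/
lemma no_config [Finite V] (hG : Chordal G) (n : ℕ) (hn : 4 ≤ n)
    (C : ZMod n → Set V)
    (hdisj : ∀ i j, i ≠ j → ∀ v, v ∈ C i → v ∈ C j → False)
    (hcons : ∀ i, ∀ a ∈ C i, ∀ b ∈ C (i+1), G.Adj a b)
    (hnc : ∀ i j, i ≠ j → j ≠ i + 1 → i ≠ j + 1 → ∃ a ∈ C i, ∃ b ∈ C j, ¬ G.Adj a b) :
    False := by
  classical
  haveI : NeZero n := ⟨by omega⟩
  have d01 : (0 : ZMod n) ≠ 1 := by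
    have h := zmod_cast_ne (n := n) (a := 0) (b := 1) (by omega) (by omega) (by omega)
    push_cast at h; exact h
  have d02 : (0 : ZMod n) ≠ 2 := by
    have h := zmod_cast_ne (n := n) (a := 0) (b := 2) (by omega) (by omega) (by omega)
    push_cast at h; exact h
  have d03 : (0 : ZMod n) ≠ 3 := by
    have h := zmod_cast_ne (n := n) (a := 0) (b := 3) (by omega) (by omega) (by omega)
    push_cast at h; exact h
  have d12 : (1 : ZMod n) ≠ 2 := by
    have h := zmod_cast_ne (n := n) (a := 1) (b := 2) (by omega) (by omega) (by omega)
    push_cast at h; exact h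
  -- a non-adjacent pair between C 0 and C 2
  obtain ⟨u, hu, w, hw, huw⟩ := hnc 0 2 d02
    (by rw [zero_add]; exact d12.symm)
    (by rw [two_add_one_eq_three]; exact d03)
  have hune : u ≠ w := fun h => hdisj 0 2 d02 u hu (h ▸ hw)
  obtain ⟨S, huS, hwS, hsep, hclq⟩ := clique_separator hG hune huw
  -- C 1 ⊆ S
  have hC1 : ∀ z ∈ C 1, z ∈ S := by
    intro z hz
    set f : ℕ → V := fun k => if k = 0 then u else if k = 1 then z else w with hf
    have hchain : IsChainW G f 2 := by
      intro i hi
      interval_cases i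
      · show G.Adj u z
        exact hcons 0 u hu z (by rwa [zero_add])
      · show G.Adj z w
        exact hcons 1 z hz w (by rw [one_add_one_eq_two]; exact hw)
    obtain ⟨i, hi, hiS⟩ := hsep f 2 hchain rfl rfl
    interval_cases i
    · exact absurd hiS huS
    · exact hiS
    · exact absurd hiS hwS
  by_cases hcover : ∃ i : ℕ, 3 ≤ i ∧ i ≤ n - 1 ∧ ∀ z ∈ C (i : ZMod n), z ∈ S
  · obtain ⟨i, hi3, hin, hiS⟩ := hcover
    have h1i : (1 : ZMod n) ≠ ((i:ℕ) : ZMod n) := by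
      have h := zmod_cast_ne (n := n) (a := 1) (b := i) (by omega) (by omega) (by omega)
      push_cast at h
      exact_mod_cast h
    have hi2 : ((i:ℕ) : ZMod n) ≠ (1 : ZMod n) + 1 := by
      rw [one_add_one_eq_two]
      have h := zmod_cast_ne (n := n) (a := i) (b := 2) (by omega) (by omega) (by omega)
      push_cast at h
      exact_mod_cast h
    have h1i1 : (1 : ZMod n) ≠ ((i:ℕ) : ZMod n) + 1 := by
      rcases Nat.eq_or_lt_of_le hin with he | hl
      · have e : ((i:ℕ) : ZMod n) + 1 = 0 := by
          rw [he]
          have e2 : ((n-1:ℕ) + 1 : ℕ) = n := by omega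
          have e3 : ((n-1:ℕ) : ZMod n) + 1 = (((n-1) + 1 : ℕ) : ZMod n) := by push_cast; ring
          rw [e3, e2, ZMod.natCast_self]
        rw [e]
        exact d01.symm
      · have e : ((i:ℕ) : ZMod n) + 1 = ((i+1 : ℕ) : ZMod n) := by push_cast; ring
        rw [e]
        have h := zmod_cast_ne (n := n) (a := 1) (b := i+1) (by omega) (by omega) (by omega)
        push_cast at h
        exact_mod_cast h
    obtain ⟨a, ha, b, hb, hab⟩ := hnc 1 ((i:ℕ) : ZMod n) h1i hi2 h1i1
    exact hab (hclq a (hC1 a ha) b (hiS b hb)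
      (fun h => hdisj 1 ((i:ℕ) : ZMod n) h1i a ha (h ▸ hb)))
  · push_neg at hcover
    have hsel : ∀ i : ℕ, 3 ≤ i → i ≤ n - 1 → ∃ z, z ∈ C (i : ZMod n) ∧ z ∉ S := by
      intro i h3 h1
      obtain ⟨z, hz, hzS⟩ := hcover i h3 h1
      exact ⟨z, hz, hzS⟩
    choose Y hY hYS using hsel
    set f : ℕ → V := fun k => if k = 0 then u else if k = n - 2 then w
      else if h : 3 ≤ n - k ∧ n - k ≤ n - 1 then Y (n-k) h.1 h.2 else u with hf
    have hmem : ∀ k ≤ n - 2, f k ∈ C ((n - k : ℕ) : ZMod n) := by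
      intro k hk
      rcases Nat.eq_zero_or_pos k with h0 | h0
      · subst h0
        have e : ((n - 0 : ℕ) : ZMod n) = 0 := by
          show ((n:ℕ) : ZMod n) = 0
          exact ZMod.natCast_self n
        rw [e]
        show (if (0:ℕ) = 0 then u else if (0:ℕ) = n - 2 then w else _) ∈ C 0
        rw [if_pos rfl]
        exact hu
      · rcases Nat.eq_or_lt_of_le hk with hk2 | hk2
        · rw [hk2]
          have e : ((n - (n-2) : ℕ) : ZMod n) = 2 := by
            have e2 : n - (n-2) = 2 := by omega
            rw [e2]; push_cast; ring
          rw [e]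
          show (if n - 2 = 0 then u else if n-2 = n-2 then w else _) ∈ C 2
          rw [if_neg (by omega), if_pos rfl]
          exact hw
        · have h3 : 3 ≤ n - k := by omega
          have h1 : n - k ≤ n - 1 := by omega
          show (if k = 0 then u else if k = n-2 then w else
            if h : 3 ≤ n - k ∧ n - k ≤ n - 1 then Y (n-k) h.1 h.2 else u) ∈ _
          rw [if_neg (by omega), if_neg (by omega), dif_pos ⟨h3, h1⟩]
          exact hY (n-k) h3 h1
    have hchain : IsChainW G f (n - 2) := by
      intro k hk
      have m1 := hmem k (by omega)
      have m2 := hmem (k+1) (by omega)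
      have e : ((n - k - 1 : ℕ) : ZMod n) + 1 = ((n - k : ℕ) : ZMod n) := by
        have e2 : (n - k - 1) + 1 = n - k := by omega
        rw [← e2]
        push_cast
        ring
      have e3 : (n - (k+1) : ℕ) = n - k - 1 := by omega
      rw [e3] at m2
      exact (hcons ((n-k-1 : ℕ) : ZMod n) (f (k+1)) m2 (f k) (by rw [e]; exact m1)).symm
    obtain ⟨i, hi, hiS⟩ := hsep f (n-2) hchain rfl (by
      show (if n - 2 = 0 then u else if n - 2 = n - 2 then w else _) = w
      rw [if_neg (by omega), if_pos rfl])
    rcases Nat.eq_zero_or_pos i with h0 | h0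
    · subst h0; exact huS hiS
    rcases Nat.eq_or_lt_of_le hi with h2 | h2
    · rw [h2] at hiS
      revert hiS
      show (if n - 2 = 0 then u else if n - 2 = n - 2 then w else _) ∈ S → False
      rw [if_neg (by omega), if_pos rfl]
      exact hwS
    · revert hiS
      show (if i = 0 then u else if i = n-2 then w else
        if h : 3 ≤ n - i ∧ n - i ≤ n - 1 then Y (n-i) h.1 h.2 else u) ∈ S → False
      rw [if_neg (by omega), if_neg (by omega), dif_pos ⟨by omega, by omega⟩]
      exact hYS (n-i) (by omega) (by omega)

end LemmaL

noncomputable section App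
variable {X : Type*} (Q : Set (Set (Set X)))

/-- the cell of a vertex -/
def cmap (p : IntVert Q) : Cell Q := ⟨p.1.1, p.1.2, p.2.1, p.2.2⟩

variable {Q}

lemma cmap_val (p : IntVert Q) : (cmap Q p).1 = p.1.1 := rfl

lemma cmap_surj : Function.Surjective (cmap Q) := by
  rintro ⟨A, π, hπ, hA⟩
  exact ⟨⟨(A, π), hπ, hA⟩, rfl⟩

lemma cmap_eq_iff {p q : IntVert Q} : cmap Q p = cmap Q q ↔ p.1.1 = q.1.1 := by
  constructor
  · intro h; exact congrArg Subtype.val h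
  · intro h; exact Subtype.ext h

variable (Q)

/-- lift of a graph on cells to a graph on vertices -/
def liftG (H : SimpleGraph (Cell Q)) : SimpleGraph (IntVert Q) where
  Adj p q := p ≠ q ∧ (cmap Q p = cmap Q q ∨ H.Adj (cmap Q p) (cmap Q q))
  symm := by
    constructor
    rintro p q ⟨h1, h2⟩
    exact ⟨h1.symm, h2.imp Eq.symm SimpleGraph.Adj.symm⟩
  loopless := by constructor; rintro p ⟨h1, _⟩; exact h1 rfl

/-- push (intersection) of a graph on vertices to a graph on cells -/
def pushG (G' : SimpleGraph (IntVert Q)) : SimpleGraph (Cell Q) where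
  Adj A B := A ≠ B ∧ ∀ p q, cmap Q p = A → cmap Q q = B → G'.Adj p q
  symm := by
    constructor
    rintro A B ⟨h1, h2⟩
    exact ⟨h1.symm, fun p q hp hq => (h2 q p hq hp).symm⟩
  loopless := by
    constructor
    rintro A ⟨h1, _⟩; exact h1 rfl

variable {Q}

lemma liftG_adj {H : SimpleGraph (Cell Q)} {p q : IntVert Q} :
    (liftG Q H).Adj p q ↔ p ≠ q ∧ (cmap Q p = cmap Q q ∨ H.Adj (cmap Q p) (cmap Q q)) :=
  Iff.rfl

lemma pushG_adj {G' : SimpleGraph (IntVert Q)} {A B : Cell Q} :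
    (pushG Q G').Adj A B ↔ A ≠ B ∧ ∀ p q, cmap Q p = A → cmap Q q = B → G'.Adj p q :=
  Iff.rfl

lemma push_lift (H : SimpleGraph (Cell Q)) : pushG Q (liftG Q H) = H := by
  ext A B
  rw [pushG_adj]
  constructor
  · rintro ⟨hne, hall⟩
    obtain ⟨p, hp⟩ := cmap_surj A
    obtain ⟨q, hq⟩ := cmap_surj B
    rcases (hall p q hp hq).2 with h | h
    · exact absurd (hp ▸ hq ▸ h) hne
    · rwa [hp, hq] at h
  · intro h
    refine ⟨h.ne, fun p q hp hq => ⟨?_, Or.inr (by rw [hp, hq]; exact h)⟩⟩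
    intro he
    exact h.ne (by rw [← hp, ← hq, he])

lemma lift_le_iff {H₁ H₂ : SimpleGraph (Cell Q)} : liftG Q H₁ ≤ liftG Q H₂ ↔ H₁ ≤ H₂ := by
  constructor
  · intro hle A B hAB
    obtain ⟨p, hp⟩ := cmap_surj A
    obtain ⟨q, hq⟩ := cmap_surj B
    have hpq : (liftG Q H₁).Adj p q :=
      ⟨fun he => hAB.ne (by rw [← hp, ← hq, he]), Or.inr (by rw [hp, hq]; exact hAB)⟩
    rcases (hle hpq).2 with h | h
    · exact absurd (hp ▸ hq ▸ h) hAB.ne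
    · rwa [hp, hq] at h
  · intro hle p q hpq
    exact ⟨hpq.1, hpq.2.imp id fun h => hle h⟩

lemma lift_inj : Function.Injective (liftG Q) := by
  intro H₁ H₂ h
  rw [← push_lift (Q := Q) H₁, ← push_lift (Q := Q) H₂, h]

/-- cells of vertices are nonempty sets -/
lemma cell_nonempty (hQ : ∀ π ∈ Q, IsPartialPartition π) (p : IntVert Q) :
    p.1.1.Nonempty := (hQ _ p.2.1).1 _ p.2.2

lemma int_adj_same_cell (hQ : ∀ π ∈ Q, IsPartialPartition π) {p q : IntVert Q}
    (hne : p ≠ q) (hc : p.1.1 = q.1.1) : (intGraph Q).Adj p q := by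
  refine ⟨hne, ?_⟩
  rw [← hc, Set.inter_self]
  exact cell_nonempty hQ p

/-- induced cycles in a lift descend to cells -/
lemma cycle_descend {H : SimpleGraph (Cell Q)} {n : ℕ} (hn : 4 ≤ n)
    {f : ZMod n → IntVert Q} (hf : IsInducedCycle (liftG Q H) n f) :
    IsInducedCycle H n (fun i => cmap Q (f i)) := by
  obtain ⟨hinj, hadj⟩ := hf
  haveI : NeZero n := ⟨by omega⟩
  have d10 : (1 : ZMod n) ≠ 0 := by
    have h := zmod_cast_ne (n := n) (a := 1) (b := 0) (by omega) (by omega) (by omega)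
    push_cast at h; exact h
  have d20 : (2 : ZMod n) ≠ 0 := by
    have h := zmod_cast_ne (n := n) (a := 2) (b := 0) (by omega) (by omega) (by omega)
    push_cast at h; exact h
  have d30 : (3 : ZMod n) ≠ 0 := by
    have h := zmod_cast_ne (n := n) (a := 3) (b := 0) (by omega) (by omega) (by omega)
    push_cast at h; exact h
  have d21 : (2 : ZMod n) ≠ 1 := by
    have h := zmod_cast_ne (n := n) (a := 2) (b := 1) (by omega) (by omega) (by omega)
    push_cast at h; exact h
  have hshift : ∀ (i a : ZMod n), i = i + a → a = 0 := by
    intro i a h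
    have h2 := h.symm
    rwa [add_eq_left] at h2
  -- no two consecutive vertices share a cell
  have key : ∀ i : ZMod n, cmap Q (f i) = cmap Q (f (i+1)) → False := by
    intro i hsame
    have hne02 : f i ≠ f (i+2) := fun he => by
      have h := hinj he
      exact d20 (hshift _ _ h)
    have hcell12 : cmap Q (f (i+1)) ≠ cmap Q (f (i+2)) := by
      intro he
      have hA : (liftG Q H).Adj (f i) (f (i+2)) := ⟨hne02, Or.inl (hsame.trans he)⟩
      rcases (hadj _ _).1 hA with h | h
      · rw [add_right_inj] at h; exact d21 h
      · rw [add_assoc] at h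
        have h3 := hshift _ _ h
        rw [two_add_one_eq_three] at h3
        exact d30 h3
    have hadj12 : (liftG Q H).Adj (f (i+1)) (f (i+2)) := (hadj _ _).2 (Or.inl (by ring))
    rcases hadj12.2 with h | h
    · exact hcell12 h
    · have hA : (liftG Q H).Adj (f i) (f (i+2)) := ⟨hne02, Or.inr (hsame ▸ h)⟩
      rcases (hadj _ _).1 hA with h' | h'
      · rw [add_right_inj] at h'; exact d21 h'
      · rw [add_assoc] at h'
        have h3 := hshift _ _ h'
        rw [two_add_one_eq_three] at h3
        exact d30 h3
  have hcinj : ∀ i j : ZMod n, cmap Q (f i) = cmap Q (f j) → i = j := by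
    intro i j he
    by_contra hne
    have hfne : f i ≠ f j := fun h => hne (hinj h)
    have : (liftG Q H).Adj (f i) (f j) := ⟨hfne, Or.inl he⟩
    rcases (hadj _ _).1 this with h | h
    · exact key i (h ▸ he)
    · exact key j (h ▸ he.symm)
  constructor
  · intro i j he
    exact hcinj i j he
  · intro i j
    constructor
    · intro hadj'
      have hne : i ≠ j := fun h => H.loopless.irrefl _ (h ▸ hadj')
      have hfne : f i ≠ f j := fun h => hne (hinj h)
      exact (hadj _ _).1 ⟨hfne, Or.inr hadj'⟩
    · intro hcons
      have hij : i ≠ j := by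
        rcases hcons with h | h
        · intro he
          rw [← he] at h
          exact d10 (hshift _ _ h)
        · intro he
          rw [he] at h
          exact d10 (hshift _ _ h)
      have := (hadj i j).2 hcons
      rcases this.2 with h | h
      · exact absurd (hcinj _ _ h) hij
      · exact h
end App

section Main
variable {X : Type*} {Q : Set (Set (Set X))}

instance intVert_finite [Finite X] : Finite (IntVert Q) := by
  unfold IntVert; infer_instance

/-- the push of a chordal graph is chordal -/
lemma push_chordal [Finite X] {G' : SimpleGraph (IntVert Q)} (hG' : Chordal G') :
    Chordal (pushG Q G') := by
  intro n hn g hcyc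
  obtain ⟨hinj, hadj⟩ := hcyc
  refine no_config hG' n hn (fun i => {p | cmap Q p = g i}) ?_ ?_ ?_
  · intro i j hij v hvi hvj
    exact hij (hinj ((hvi : cmap Q v = g i).symm.trans hvj))
  · intro i a ha b hb
    have h := (hadj i (i+1)).2 (Or.inl rfl)
    exact h.2 a b ha hb
  · intro i j hij hji1 hij1
    have hnadj : ¬ (pushG Q G').Adj (g i) (g j) := by
      rw [hadj]
      rintro (h | h)
      · exact hji1 h
      · exact hij1 h
    rw [pushG_adj] at hnadj
    push_neg at hnadj
    have hgne : g i ≠ g j := fun h => hij (hinj h)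
    obtain ⟨p, q, hp, hq, hnadj'⟩ := hnadj hgne
    exact ⟨p, hp, q, hq, hnadj'⟩

/-- the lift of a chordal graph is chordal -/
lemma lift_chordal {H : SimpleGraph (Cell Q)} (hH : Chordal H) : Chordal (liftG Q H) := by
  intro n hn f hcyc
  exact hH n hn _ (cycle_descend hn hcyc)

/-- the lift of a chordal sandwich is a restricted chordal completion -/
lemma lift_RCC {K : SimpleGraph (Cell Q)}
    (hK : ChordalSandwich (intStarGraph Q) (forbGraph Q) K) :
    RestrictedChordalCompletion Q (liftG Q K) := by
  obtain ⟨hKc, hKge, hKforb⟩ := hK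
  refine ⟨⟨lift_chordal hKc, ?_⟩, ?_⟩
  · rintro p q ⟨hne, hinter⟩
    by_cases hc : cmap Q p = cmap Q q
    · exact ⟨hne, Or.inl hc⟩
    · refine ⟨hne, Or.inr (hKge ⟨fun h => hc (cmap_eq_iff.2 h), hinter⟩)⟩
  · rintro p q hsame hcells ⟨hne, hc | hadj⟩
    · exact hcells (cmap_eq_iff.1 hc)
    · refine hKforb _ _ hadj ⟨hcells, p.1.2, p.2.1, p.2.2, ?_⟩
      rw [hsame]
      exact q.2.2

/-- lift of push of an RCC is an RCC below it -/
lemma lift_push_RCC [Finite X] (hQ : ∀ π ∈ Q, IsPartialPartition π)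
    {G' : SimpleGraph (IntVert Q)} (hG' : RestrictedChordalCompletion Q G') :
    RestrictedChordalCompletion Q (liftG Q (pushG Q G')) ∧ liftG Q (pushG Q G') ≤ G' := by
  obtain ⟨⟨hc, hge⟩, hres⟩ := hG'
  constructor
  · refine ⟨⟨lift_chordal (push_chordal hc), ?_⟩, ?_⟩
    · rintro p q ⟨hne, hinter⟩
      by_cases hcm : cmap Q p = cmap Q q
      · exact ⟨hne, Or.inl hcm⟩
      · refine ⟨hne, Or.inr ⟨hcm, ?_⟩⟩
        intro p' q' hp' hq'
        refine hge ⟨?_, ?_⟩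
        · intro he
          exact hcm (by rw [← hp', ← hq', he])
        · have e1 : p'.1.1 = p.1.1 := congrArg Subtype.val hp'
          have e2 : q'.1.1 = q.1.1 := congrArg Subtype.val hq'
          rw [e1, e2]
          exact hinter
    · rintro p q hsame hcells ⟨hne, hcm | hpush⟩
      · exact hcells (cmap_eq_iff.1 hcm)
      · exact hres p q hsame hcells (hpush.2 p q rfl rfl)
  · rintro p q ⟨hne, hcm | hpush⟩
    · exact hge (int_adj_same_cell hQ hne (cmap_eq_iff.1 hcm))
    · exact hpush.2 p q rfl rfl

/-- twin lemma: a minimal RCC is the lift of its push -/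
lemma twin_lemma [Finite X] (hQ : ∀ π ∈ Q, IsPartialPartition π)
    {G' : SimpleGraph (IntVert Q)} (hG' : MinimalRestrictedChordalCompletion Q G') :
    liftG Q (pushG Q G') = G' := by
  obtain ⟨h1, h2⟩ := lift_push_RCC hQ hG'.1
  exact hG'.2 _ h1 h2

/-- the push of an RCC is a chordal sandwich -/
lemma push_sandwich [Finite X] {G' : SimpleGraph (IntVert Q)}
    (hG' : RestrictedChordalCompletion Q G') :
    ChordalSandwich (intStarGraph Q) (forbGraph Q) (pushG Q G') := by
  obtain ⟨⟨hc, hge⟩, hres⟩ := hG'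
  refine ⟨push_chordal hc, ?_, ?_⟩
  · rintro A B ⟨hvalne, hinter⟩
    refine ⟨fun h => hvalne (congrArg Subtype.val h), ?_⟩
    intro p q hp hq
    refine hge ⟨?_, ?_⟩
    · intro he
      exact hvalne (by rw [← hp, ← hq, he])
    · have e1 : p.1.1 = A.1 := congrArg Subtype.val hp
      have e2 : q.1.1 = B.1 := congrArg Subtype.val hq
      rw [e1, e2]
      exact hinter
  · rintro A B hpush ⟨hvalne, π, hπ, hA, hB⟩
    set p : IntVert Q := ⟨(A.1, π), hπ, hA⟩ with hpdef
    set q : IntVert Q := ⟨(B.1, π), hπ, hB⟩ with hqdef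
    have hadj : G'.Adj p q := hpush.2 p q (Subtype.ext rfl) (Subtype.ext rfl)
    exact hres p q rfl hvalne hadj

/-- descent to a minimal RCC -/
lemma exists_min_RCC [Finite X] {K : SimpleGraph (IntVert Q)}
    (hK : RestrictedChordalCompletion Q K) :
    ∃ K', MinimalRestrictedChordalCompletion Q K' ∧ K' ≤ K := by
  obtain ⟨M, hle, hmin⟩ :=
    exists_minimal_le_of_wellFoundedLT (fun K' => RestrictedChordalCompletion Q K') _ hK
  exact ⟨M, ⟨hmin.1, fun H hH hle' => le_antisymm hle' (hmin.2 hH hle')⟩, hle⟩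

/-- the push of a minimal RCC is a minimal chordal sandwich -/
lemma push_min [Finite X] (hQ : ∀ π ∈ Q, IsPartialPartition π)
    {G' : SimpleGraph (IntVert Q)} (hG' : MinimalRestrictedChordalCompletion Q G') :
    MinimalChordalSandwich (intStarGraph Q) (forbGraph Q) (pushG Q G') := by
  refine ⟨push_sandwich hG'.1, ?_⟩
  intro K hK hle
  have h1 : liftG Q K ≤ liftG Q (pushG Q G') := lift_le_iff.2 hle
  rw [twin_lemma hQ hG'] at h1
  have h2 : liftG Q K = G' := hG'.2 _ (lift_RCC hK) h1
  apply lift_inj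
  rw [h2, twin_lemma hQ hG']

/-- the lift of a minimal chordal sandwich is a minimal RCC -/
lemma lift_min [Finite X] (hQ : ∀ π ∈ Q, IsPartialPartition π)
    {H : SimpleGraph (Cell Q)}
    (hH : MinimalChordalSandwich (intStarGraph Q) (forbGraph Q) H) :
    MinimalRestrictedChordalCompletion Q (liftG Q H) := by
  refine ⟨lift_RCC hH.1, ?_⟩
  intro K hK hle
  obtain ⟨K', hK'min, hK'le⟩ := exists_min_RCC hK
  have htw : liftG Q (pushG Q K') = K' := twin_lemma hQ hK'min
  have hps : ChordalSandwich (intStarGraph Q) (forbGraph Q) (pushG Q K') :=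
    push_sandwich hK'min.1
  have h1 : liftG Q (pushG Q K') ≤ liftG Q H := by
    rw [htw]
    exact le_trans hK'le hle
  have h2 : pushG Q K' = H := hH.2 _ hps (lift_le_iff.1 h1)
  have h3 : K' = liftG Q H := by rw [← htw, h2]
  exact le_antisymm hle (h3 ▸ hK'le)

end Main

theorem stmt_14 {X : Type*} [Fintype X] (Q : Set (Set (Set X)))
    (hQ : ∀ π ∈ Q, IsPartialPartition π) :
    Nonempty
      ({G' : SimpleGraph (IntVert Q) // MinimalRestrictedChordalCompletion Q G'} ≃
        {H : SimpleGraph (Cell Q) //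
          MinimalChordalSandwich (intStarGraph Q) (forbGraph Q) H}) := by
  refine ⟨⟨fun G' => ⟨pushG Q G'.1, push_min hQ G'.2⟩,
    fun H => ⟨liftG Q H.1, lift_min hQ H.2⟩, ?_, ?_⟩⟩
  · rintro ⟨G', hG'⟩
    exact Subtype.ext (twin_lemma hQ hG')
  · rintro ⟨H, hH⟩
    exact Subtype.ext (push_lift H)
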